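/- For every natural number n ≥ 1 and every prime p, there exists an irreducible character χ of the symmetric group S_n of degree coprime to p such that the restriction of χ to S_{n-1} has at least one irreducible constituent of degree coprime to p. Equivalently, br(n) ≥ 1, i.e., for every p'-partition λ of n, the set λ⁻_{p'} of p'-partitions obtained from λ by removing one node is nonempty. -/

import Mathlib

/-- The hook length of the cell `(i, j)` of a Young diagram. -/
def hookLength (Y : YoungDiagram) (i j : ℕ) : ℕ :=
  Y.rowLen i + Y.colLen j - i - j - 1

/-- The degree of the irreducible character `χ^λ` of the symmetric group,
given by the hook length formula. -/
def charDegree (Y : YoungDiagram) : ℕ :=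
  Y.card.factorial / ∏ c ∈ Y.cells, hookLength Y c.1 c.2

/-- `λ` is a `p'`-partition: the degree of `χ^λ` is coprime to `p`. -/
def CoprimeDeg (p : ℕ) (Y : YoungDiagram) : Prop := ¬ p ∣ charDegree Y

/-- `λ⁻`: the set of partitions obtained from `λ` by removing one node. -/
def Yminus (Y : YoungDiagram) : Set YoungDiagram :=
  {Z | Z.cells ⊆ Y.cells ∧ Z.card + 1 = Y.card}

/-- `λ⁻_{p'}`: the `p'`-partitions obtained from `λ` by removing one node. -/
def YminusP (p : ℕ) (Y : YoungDiagram) : Set YoungDiagram :=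
  {Z | Z ∈ Yminus Y ∧ CoprimeDeg p Z}

/-- `br n = max {|λ⁻_{p'}| : λ a p'-partition of n}`. -/
noncomputable def br (p n : ℕ) : ℕ :=
  sSup {m | ∃ Y : YoungDiagram, Y.card = n ∧ CoprimeDeg p Y ∧ m = (YminusP p Y).ncard}

/-- `Z` is obtained from `Y` by removing a border strip (rim hook) of size `e`:
the removed cells occupy `e` consecutive diagonals, one cell on each. -/
def RemoveHook (e : ℕ) (Y Z : YoungDiagram) : Prop :=
  Z.cells ⊆ Y.cells ∧ Z.card + e = Y.card ∧
    (∃ d : ℤ, ∀ c ∈ Y.cells, c ∉ Z.cells →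
      d ≤ (c.2 : ℤ) - (c.1 : ℤ) ∧ (c.2 : ℤ) - (c.1 : ℤ) < d + e) ∧
    ∀ c ∈ Y.cells, ∀ c' ∈ Y.cells, c ∉ Z.cells → c' ∉ Z.cells →
      (c.2 : ℤ) - (c.1 : ℤ) = (c'.2 : ℤ) - (c'.1 : ℤ) → c = c'

/-- `Y` is an `e`-core: no hook of length `e` can be removed. -/
def IsECore (e : ℕ) (Y : YoungDiagram) : Prop := ∀ Z, ¬ RemoveHook e Y Z

/-- `Z = C_e(Y)`: `Z` is obtained from `Y` by successively removing `e`-hooks and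
`Z` is an `e`-core. -/
def CoreOf (e : ℕ) (Y Z : YoungDiagram) : Prop :=
  Relation.ReflTransGen (RemoveHook e) Y Z ∧ IsECore e Z


section Aux
open Polynomial Finset

lemma coeff_comp_X_sub_one (p : ℚ[X]) (t : ℕ) :
    (p.comp (X - C 1)).coeff t =
      ∑ m ∈ Finset.range (p.natDegree + 1),
        p.coeff m * ((-1:ℚ)^(m-t) * (m.choose t)) := by
  rw [comp_eq_sum_left,
    Polynomial.sum_over_range (p := p) (f := fun e a => C a * (X - C 1) ^ e) (by simp),
    finset_sum_coeff]
  refine Finset.sum_congr rfl fun m _ => ?_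
  have h : (X - C (1:ℚ)) = X + C (-1) := by rw [map_neg]; ring
  rw [h, coeff_C_mul, coeff_X_add_C_pow]

lemma residue_identity (K : ℕ) (hK : 1 ≤ K) (x : ℕ → ℚ)
    (hinj : Set.InjOn x (Finset.range K)) :
    ∑ r ∈ Finset.range K, x r * (∏ j ∈ (Finset.range K).erase r, (x r - 1 - x j))
        / (∏ j ∈ (Finset.range K).erase r, (x r - x j))
      = (∑ i ∈ Finset.range K, x i) - (K * (K - 1)) / 2 := by
  classical
  rcases eq_or_lt_of_le hK with h1 | hK
  · have h1 : K = 1 := h1.symm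
    subst h1
    norm_num
  have hK : 2 ≤ K := hK
  set S := Finset.range K with hS
  have hD : ∀ r ∈ S, (∏ j ∈ S.erase r, (x r - x j)) ≠ 0 := by
    intro r hr
    rw [Finset.prod_ne_zero_iff]
    intro j hj
    have hj' := Finset.mem_erase.mp hj
    exact sub_ne_zero.mpr fun h => hj'.1 (hinj (by simpa using hr) (by simpa using hj'.2) h).symm
  set g : ℚ[X] := ∏ i ∈ S, (X - C (x i)) with hg
  have hgm : g.Monic := monic_prod_of_monic _ _ fun i _ => monic_X_sub_C _
  have hdeg : g.natDegree = K := by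
    rw [hg, natDegree_prod _ _ fun i _ => X_sub_C_ne_zero _]
    simp [hS]
  have hcK : g.coeff K = 1 := by
    have := hgm.coeff_natDegree
    rwa [hdeg] at this
  have hcK1 : g.coeff (K-1) = -∑ i ∈ S, x i := by
    have h1 : g.nextCoeff = -∑ i ∈ S, x i := prod_X_sub_C_nextCoeff x
    rwa [nextCoeff_of_natDegree_pos (by omega), hdeg] at h1
  have hct : ∀ t, K < t → g.coeff t = 0 := fun t ht =>
    coeff_eq_zero_of_natDegree_lt (by omega)
  set gh : ℚ[X] := g.comp (X - C 1) with hgh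
  have hghc : ∀ t, gh.coeff t = ∑ m ∈ Finset.range (K+1),
      g.coeff m * ((-1:ℚ)^(m-t) * (m.choose t)) := by
    intro t; rw [hgh, coeff_comp_X_sub_one, hdeg]
  have hghK : gh.coeff K = 1 := by
    rw [hghc]
    rw [Finset.sum_eq_single_of_mem K (by simp)]
    · simp [hcK]
    · intro m hm hmK
      have : m < K := by simp at hm; omega
      simp [Nat.choose_eq_zero_of_lt this]
  have hchoose1 : K.choose (K-1) = K := by
    have h := Nat.choose_symm (show 1 ≤ K by omega) (n := K)
    simpa [Nat.choose_one_right] using h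
  have hghK1 : gh.coeff (K-1) = g.coeff (K-1) - K := by
    rw [hghc]
    have e1 : K + 1 = (K-1) + 2 := by omega
    rw [e1, Finset.sum_range_succ, Finset.sum_range_succ]
    have e2 : K - 1 + 1 = K := by omega
    rw [Finset.sum_eq_zero (fun m hm => by
      simp only [Finset.mem_range] at hm
      simp [Nat.choose_eq_zero_of_lt hm])]
    rw [e2]
    have e3 : K - (K-1) = 1 := by omega
    rw [e3, hcK, Nat.sub_self, Nat.choose_self, hchoose1]
    push_cast
    ring
  have hghK2 : gh.coeff (K-2)
      = g.coeff (K-2) - ((K:ℚ)-1) * g.coeff (K-1) + ((K:ℚ) * ((K:ℚ)-1))/2 := by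
    rw [hghc]
    have e1 : K + 1 = (K-2) + 3 := by omega
    rw [e1, Finset.sum_range_succ, Finset.sum_range_succ, Finset.sum_range_succ]
    have e2 : K - 2 + 1 = K - 1 := by omega
    have e2' : K - 2 + 2 = K := by omega
    rw [Finset.sum_eq_zero (fun m hm => by
      simp only [Finset.mem_range] at hm
      simp [Nat.choose_eq_zero_of_lt hm])]
    rw [e2, e2']
    have e3 : K - (K-2) = 2 := by omega
    have e4 : K - 1 - (K-2) = 1 := by omega
    have e5 : (K-1).choose (K-2) = K - 1 := by
      have h := Nat.choose_symm (show 1 ≤ K - 1 by omega) (n := K - 1)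
      have e : K - 1 - 1 = K - 2 := by omega
      rw [e] at h
      simpa [Nat.choose_one_right] using h
    have e6 : (K.choose (K-2) : ℚ) = (K:ℚ) * ((K:ℚ)-1) / 2 := by
      rw [← Nat.choose_symm (by omega), e3, Nat.cast_choose_two]
    have e7 : ((K - 1 : ℕ) : ℚ) = (K : ℚ) - 1 := by
      rw [Nat.cast_sub (by omega)]; norm_num
    rw [e3, e4, e5, e6, e7, hcK, Nat.sub_self, Nat.choose_self]
    push_cast
    ring
  have hght : ∀ t, K < t → gh.coeff t = 0 := by
    intro t ht
    apply coeff_eq_zero_of_natDegree_lt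
    rw [hgh, natDegree_comp, hdeg, natDegree_X_sub_C]
    omega
  set Q : ℚ[X] := (X - C (K:ℚ)) * g - X * gh with hQ
  have hQc : ∀ m : ℕ, Q.coeff (m+1) = g.coeff m - K * g.coeff (m+1) - gh.coeff m := by
    intro m
    rw [hQ, coeff_sub, sub_mul, coeff_sub, coeff_X_mul, coeff_X_mul, coeff_C_mul]
    try ring
  have hQhigh : ∀ m, K ≤ m → Q.coeff m = 0 := by
    intro m hm
    obtain ⟨m', rfl⟩ : ∃ m', m = m' + 1 := ⟨m - 1, by omega⟩
    rw [hQc]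
    rcases eq_or_lt_of_le (show K - 1 ≤ m' by omega) with h | h
    · have : m' = K - 1 := h.symm
      subst this
      have e2 : K - 1 + 1 = K := by omega
      rw [e2, hghK1, hcK]
      ring
    · rcases eq_or_lt_of_le (show K ≤ m' by omega) with h2 | h2
      · have : m' = K := h2.symm
        subst this
        rw [hcK, hct _ (by omega), hghK]
        ring
      · rw [hct _ (by omega), hct _ (by omega), hght _ (by omega)]
        ring
  have hQdeg : Q.degree < (K : ℕ) := by
    rw [degree_lt_iff_coeff_zero]
    intro m hm
    exact hQhigh m (by exact_mod_cast hm)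
  have hQK1 : Q.coeff (K-1) = (∑ i ∈ S, x i) - ((K:ℚ) * ((K:ℚ)-1))/2 := by
    obtain ⟨m', e⟩ : ∃ m', K - 1 = m' + 1 := ⟨K - 2, by omega⟩
    have e2 : m' = K - 2 := by omega
    rw [e, hQc, e2]
    have e3 : K - 2 + 1 = K - 1 := by omega
    rw [e3, hghK2, hcK1]
    ring
  have hQev : ∀ r ∈ S, Q.eval (x r) = x r * ∏ j ∈ S.erase r, (x r - 1 - x j) := by
    intro r hr
    have hg0 : g.eval (x r) = 0 := by
      rw [hg, eval_prod]
      exact Finset.prod_eq_zero hr (by simp)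
    have hgh0 : gh.eval (x r) = g.eval (x r - 1) := by
      rw [hgh, eval_comp]; simp
    have hgeval : g.eval (x r - 1) = - ∏ j ∈ S.erase r, (x r - 1 - x j) := by
      rw [hg, eval_prod]
      simp only [eval_sub, eval_X, eval_C]
      rw [← Finset.mul_prod_erase _ (fun j => x r - 1 - x j) hr]
      rw [show x r - 1 - x r = -1 by ring]
      ring
    rw [hQ]
    simp only [eval_sub, eval_mul, eval_X, eval_C, hg0, hgh0, hgeval]
    ring
  set q : ℕ → ℚ := fun r =>
    x r * (∏ j ∈ S.erase r, (x r - 1 - x j)) / (∏ j ∈ S.erase r, (x r - x j)) with hq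
  set E : ℚ[X] := Q - ∑ r ∈ S, C (q r) * ∏ j ∈ S.erase r, (X - C (x j)) with hE
  have hEev : ∀ s ∈ S, E.eval (x s) = 0 := by
    intro s hs
    rw [hE, eval_sub, eval_finset_sum]
    rw [Finset.sum_eq_single_of_mem s hs]
    · simp only [eval_mul, eval_C, eval_prod, eval_sub, eval_X]
      rw [hq]
      simp only []
      rw [div_mul_cancel₀ _ (hD s hs), hQev s hs, sub_self]
    · intro r hr hrs
      have hsr : s ∈ S.erase r := Finset.mem_erase.mpr ⟨fun h => hrs h.symm, hs⟩
      simp only [eval_mul, eval_C, eval_prod, eval_sub, eval_X]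
      rw [Finset.prod_eq_zero hsr (by ring)]
      ring
  have hsumdeg : (∑ r ∈ S, C (q r) * ∏ j ∈ S.erase r, (X - C (x j))).degree < (K:ℕ) := by
    refine lt_of_le_of_lt (degree_sum_le _ _) ?_
    rw [Finset.sup_lt_iff (by exact_mod_cast WithBot.bot_lt_coe (K:ℕ))]
    intro r hr
    refine lt_of_le_of_lt (degree_mul_le _ _) ?_
    have h1 : (C (q r)).degree ≤ 0 := degree_C_le
    have h2 : (∏ j ∈ S.erase r, (X - C (x j))).degree = ((K - 1 : ℕ) : WithBot ℕ) := by
      rw [degree_prod]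
      simp only [degree_X_sub_C]
      rw [Finset.sum_const, Finset.card_erase_of_mem hr]
      simp [hS]
    calc (C (q r)).degree + (∏ j ∈ S.erase r, (X - C (x j))).degree
        ≤ 0 + ((K - 1 : ℕ) : WithBot ℕ) := add_le_add h1 (le_of_eq h2)
      _ = ((K - 1 : ℕ) : WithBot ℕ) := by rw [zero_add]
      _ < (K : ℕ) := by exact_mod_cast (by omega : K - 1 < K)
  have hEdeg : E.degree < (K:ℕ) :=
    lt_of_le_of_lt (degree_sub_le _ _) (max_lt hQdeg hsumdeg)
  have hE0 : E = 0 := by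
    by_cases h : E = 0
    · exact h
    · apply Polynomial.eq_zero_of_natDegree_lt_card_of_eval_eq_zero' E (S.image x)
      · intro i hi
        obtain ⟨s, hs, rfl⟩ := Finset.mem_image.mp hi
        exact hEev s hs
      · rw [Finset.card_image_of_injOn hinj]
        rw [← natDegree_lt_iff_degree_lt h] at hEdeg
        simpa [hS] using hEdeg
  have hQsum : Q = ∑ r ∈ S, C (q r) * ∏ j ∈ S.erase r, (X - C (x j)) :=
    sub_eq_zero.mp hE0
  have hfinal : Q.coeff (K-1) = ∑ r ∈ S, q r := by
    rw [hQsum, finset_sum_coeff]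
    refine Finset.sum_congr rfl fun r hr => ?_
    rw [coeff_C_mul]
    have hm : (∏ j ∈ S.erase r, (X - C (x j))).Monic :=
      monic_prod_of_monic _ _ fun j _ => monic_X_sub_C _
    have hd : (∏ j ∈ S.erase r, (X - C (x j))).natDegree = K - 1 := by
      rw [natDegree_prod _ _ fun j _ => X_sub_C_ne_zero _]
      simp only [natDegree_X_sub_C]
      rw [Finset.sum_const, Finset.card_erase_of_mem hr]
      simp [hS]
    rw [← hd, hm.coeff_natDegree, mul_one]
  have h2 := hQK1
  rw [hfinal] at h2
  simp only [hq] at h2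
  exact h2


open Finset

/-- beta numbers -/
def beta (Y : YoungDiagram) (K i : ℕ) : ℕ := Y.rowLen i + (K - 1 - i)

lemma prod_range_sub_eq_factorial (n : ℕ) :
    ∏ t ∈ Finset.range n, (n - t) = n.factorial := by
  rw [← Finset.prod_range_add_one_eq_factorial, ← Finset.prod_range_reflect]
  exact Finset.prod_congr rfl fun j hj => by simp only [Finset.mem_range] at hj; omega

lemma beta_anti (Y : YoungDiagram) (K : ℕ) {i j : ℕ} (hij : i < j) (hj : j < K) :
    beta Y K j < beta Y K i := by
  have h := Y.rowLen_anti i j (le_of_lt hij)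
  unfold beta
  omega

lemma hook_eq (Y : YoungDiagram) (K : ℕ) {i j : ℕ} (hK : Y.colLen 0 ≤ K) (hi : i < K)
    (hj : j < Y.rowLen i) :
    hookLength Y i j + (j + (K - Y.colLen j)) = beta Y K i ∧
      1 ≤ hookLength Y i j := by
  have hmem : (i, j) ∈ Y := YoungDiagram.mem_iff_lt_rowLen.mpr hj
  have h1 : i < Y.colLen j := YoungDiagram.mem_iff_lt_colLen.mp hmem
  have h3 : Y.colLen j ≤ K := le_trans (Y.colLen_anti 0 j (Nat.zero_le _)) hK
  unfold hookLength beta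
  omega

lemma row_fact (Y : YoungDiagram) (K : ℕ) (hK : Y.colLen 0 ≤ K) {i : ℕ} (hi : i < K) :
    (beta Y K i).factorial =
      (∏ j ∈ Finset.range (Y.rowLen i), hookLength Y i j) *
      ∏ j ∈ Finset.Ioo i K, (beta Y K i - beta Y K j) := by
  classical
  have hKc : ∀ j, Y.colLen j ≤ K := fun j => le_trans (Y.colLen_anti 0 j (Nat.zero_le _)) hK
  set m : ℕ → ℕ := fun j => j + (K - Y.colLen j) with hm
  have hmmono : ∀ a b, a < b → m a < m b := by
    intro a b hab
    have h1 := Y.colLen_anti a b (le_of_lt hab)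
    have h2 := hKc a
    simp only [hm]
    omega
  have hminj : Set.InjOn m (Finset.range (Y.rowLen i)) := by
    intro a _ b _ h
    rcases lt_trichotomy a b with hh | hh | hh
    · exact absurd h (Nat.ne_of_lt (hmmono a b hh))
    · exact hh
    · exact absurd h.symm (Nat.ne_of_lt (hmmono b a hh))
  have hbinj : Set.InjOn (beta Y K) (Finset.Ioo i K) := by
    intro a ha b hb h
    simp only [Finset.coe_Ioo, Set.mem_Ioo] at ha hb
    rcases lt_trichotomy a b with hh | hh | hh
    · exact absurd h.symm (Nat.ne_of_lt (beta_anti Y K hh hb.2))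
    · exact hh
    · exact absurd h (Nat.ne_of_lt (beta_anti Y K hh ha.2))
  set A : Finset ℕ := (Finset.range (Y.rowLen i)).image m with hA
  set B : Finset ℕ := (Finset.Ioo i K).image (beta Y K) with hB
  have hAsub : A ⊆ Finset.range (beta Y K i) := by
    intro t ht
    rw [hA, Finset.mem_image] at ht
    obtain ⟨j, hj, rfl⟩ := ht
    rw [Finset.mem_range] at hj ⊢
    have := hook_eq Y K hK hi hj
    simp only [hm]
    omega
  have hBsub : B ⊆ Finset.range (beta Y K i) := by
    intro t ht
    rw [hB, Finset.mem_image] at ht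
    obtain ⟨j, hj, rfl⟩ := ht
    rw [Finset.mem_Ioo] at hj
    rw [Finset.mem_range]
    exact beta_anti Y K hj.1 hj.2
  have hdisj : Disjoint A B := by
    rw [Finset.disjoint_left]
    intro t htA htB
    rw [hA, Finset.mem_image] at htA
    rw [hB, Finset.mem_image] at htB
    obtain ⟨j, hj, hjt⟩ := htA
    obtain ⟨j', hj', hj't⟩ := htB
    rw [Finset.mem_range] at hj
    rw [Finset.mem_Ioo] at hj'
    have hcell : j < Y.rowLen j' ↔ j' < Y.colLen j := by
      rw [← YoungDiagram.mem_iff_lt_rowLen, ← YoungDiagram.mem_iff_lt_colLen]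
    have h3 := hKc j
    simp only [hm] at hjt
    unfold beta at hj't
    by_cases hcase : j < Y.rowLen j'
    · have := hcell.mp hcase
      omega
    · have : ¬ j' < Y.colLen j := fun h => hcase (hcell.mpr h)
      omega
  have hcardA : A.card = Y.rowLen i := by
    rw [hA, Finset.card_image_of_injOn hminj, Finset.card_range]
  have hcardB : B.card = K - 1 - i := by
    rw [hB, Finset.card_image_of_injOn hbinj, Nat.card_Ioo]
    omega
  have hunion : A ∪ B = Finset.range (beta Y K i) := by
    apply Finset.eq_of_subset_of_card_le (Finset.union_subset hAsub hBsub)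
    rw [Finset.card_union_of_disjoint hdisj, hcardA, hcardB, Finset.card_range]
    unfold beta
    omega
  have hsplit : ∏ t ∈ Finset.range (beta Y K i), (beta Y K i - t)
      = (∏ t ∈ A, (beta Y K i - t)) * ∏ t ∈ B, (beta Y K i - t) := by
    rw [← hunion, Finset.prod_union hdisj]
  rw [← prod_range_sub_eq_factorial, hsplit]
  congr 1
  · rw [hA, Finset.prod_image hminj]
    refine Finset.prod_congr rfl fun j hj => ?_
    rw [Finset.mem_range] at hj
    have := hook_eq Y K hK hi hj
    simp only [hm]
    omega
  · rw [hB, Finset.prod_image hbinj]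

lemma cells_eq_biUnion (Y : YoungDiagram) (K : ℕ) (hK : Y.colLen 0 ≤ K) :
    Y.cells = (Finset.range K).biUnion
      (fun i => {i} ×ˢ Finset.range (Y.rowLen i)) := by
  ext ⟨a, b⟩
  simp only [Finset.mem_biUnion, Finset.mem_range, Finset.mem_product,
    Finset.mem_singleton]
  constructor
  · intro h
    have hb : b < Y.rowLen a := YoungDiagram.mem_iff_lt_rowLen.mp (Y.mem_cells _ |>.mp h)
    have ha : a < Y.colLen 0 := YoungDiagram.mem_iff_lt_colLen.mp
      (Y.up_left_mem (le_refl a) (Nat.zero_le b) (Y.mem_cells _ |>.mp h))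
    exact ⟨a, lt_of_lt_of_le ha hK, rfl, hb⟩
  · rintro ⟨i, hi, rfl, hb⟩
    exact (Y.mem_cells _).mpr (YoungDiagram.mem_iff_lt_rowLen.mpr hb)

lemma prod_cells_eq (Y : YoungDiagram) (K : ℕ) (hK : Y.colLen 0 ≤ K)
    (f : ℕ → ℕ → ℕ) :
    ∏ c ∈ Y.cells, f c.1 c.2
      = ∏ i ∈ Finset.range K, ∏ j ∈ Finset.range (Y.rowLen i), f i j := by
  classical
  rw [cells_eq_biUnion Y K hK, Finset.prod_biUnion]
  · refine Finset.prod_congr rfl fun i _ => ?_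
    rw [Finset.singleton_product, Finset.prod_map]
    rfl
  · intro s hs t ht hst
    simp only [Finset.disjoint_left]
    rintro ⟨a, b⟩ ha hb
    simp only [Finset.mem_product, Finset.mem_singleton] at ha hb
    exact hst (ha.1.symm.trans hb.1)

lemma card_cells_eq (Y : YoungDiagram) (K : ℕ) (hK : Y.colLen 0 ≤ K) :
    Y.card = ∑ i ∈ Finset.range K, Y.rowLen i := by
  classical
  show Y.cells.card = _
  rw [cells_eq_biUnion Y K hK, Finset.card_biUnion]
  · refine Finset.sum_congr rfl fun i _ => ?_
    rw [Finset.card_product, Finset.card_singleton, Finset.card_range, one_mul]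
  · intro s hs t ht hst
    simp only [Finset.disjoint_left]
    rintro ⟨a, b⟩ ha hb
    simp only [Finset.mem_product, Finset.mem_singleton] at ha hb
    exact hst (ha.1.symm.trans hb.1)

lemma global_fact (Y : YoungDiagram) (K : ℕ) (hK : Y.colLen 0 ≤ K) :
    ∏ i ∈ Finset.range K, (beta Y K i).factorial
      = (∏ c ∈ Y.cells, hookLength Y c.1 c.2) *
        ∏ i ∈ Finset.range K, ∏ j ∈ Finset.Ioo i K, (beta Y K i - beta Y K j) := by
  rw [prod_cells_eq Y K hK (hookLength Y), ← Finset.prod_mul_distrib]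
  exact Finset.prod_congr rfl fun i hi =>
    row_fact Y K hK (Finset.mem_range.mp hi)

lemma sum_beta (Y : YoungDiagram) (K : ℕ) (hK : Y.colLen 0 ≤ K) :
    2 * (∑ i ∈ Finset.range K, beta Y K i) + K = 2 * Y.card + K * K := by
  unfold beta
  rw [Finset.sum_add_distrib, card_cells_eq Y K hK]
  have h1 : ∑ i ∈ Finset.range K, (K - 1 - i) = ∑ i ∈ Finset.range K, i := by
    rw [← Finset.sum_range_reflect]
    exact Finset.sum_congr rfl fun j hj => by
      simp only [Finset.mem_range] at hj; omega
  have h2 := Finset.sum_range_id_mul_two K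
  have h4 : K * (K - 1) + K = K * K := by
    rcases K with _ | k
    · rfl
    · simp only [Nat.succ_sub_one]
      ring
  omega

lemma rowLen_eq_of_iff {Z : YoungDiagram} {i l : ℕ} (h : ∀ j, (i, j) ∈ Z ↔ j < l) :
    Z.rowLen i = l := by
  rcases lt_trichotomy (Z.rowLen i) l with hh | hh | hh
  · have := YoungDiagram.mem_iff_lt_rowLen.mp ((h _).mpr hh)
    omega
  · exact hh
  · have := (h l).mp (YoungDiagram.mem_iff_lt_rowLen.mpr hh)
    omega

/-- Removing the corner cell at the end of row `r` (junk value if not removable). -/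
def eraseCorner (Y : YoungDiagram) (r : ℕ) : YoungDiagram :=
  if h : Y.rowLen (r+1) < Y.rowLen r then
    { cells := Y.cells.erase (r, Y.rowLen r - 1)
      isLowerSet := by
        intro a b hba ha
        rw [Finset.coe_erase, Set.mem_diff] at ha ⊢
        refine ⟨Y.isLowerSet hba ha.1, ?_⟩
        intro hbc
        apply ha.2
        simp only [Set.mem_singleton_iff] at hbc ⊢
        obtain ⟨b1, b2⟩ := b
        obtain ⟨a1, a2⟩ := a
        obtain ⟨hb1, hb2⟩ := Prod.mk.injEq .. ▸ hbc
        subst hb1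
        obtain ⟨h1, h2⟩ := Prod.mk_le_mk.mp hba
        have hmem : (a1, a2) ∈ Y := ha.1
        have ha2 : a2 < Y.rowLen a1 := YoungDiagram.mem_iff_lt_rowLen.mp hmem
        have hanti := Y.rowLen_anti b1 a1 h1
        have ha1 : a1 = b1 := by
          by_contra hne
          have hle : b1 + 1 ≤ a1 := by omega
          have := Y.rowLen_anti (b1+1) a1 hle
          omega
        subst ha1
        have : a2 = Y.rowLen a1 - 1 := by omega
        rw [this] }
  else Y

lemma eraseCorner_mem {Y : YoungDiagram} {r : ℕ} (h : Y.rowLen (r+1) < Y.rowLen r)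
    (c : ℕ × ℕ) : c ∈ (eraseCorner Y r).cells ↔ c ∈ Y.cells ∧ c ≠ (r, Y.rowLen r - 1) := by
  rw [eraseCorner, dif_pos h]
  exact Finset.mem_erase.trans (by tauto)

lemma eraseCorner_rowLen {Y : YoungDiagram} {r : ℕ} (h : Y.rowLen (r+1) < Y.rowLen r) (i : ℕ) :
    (eraseCorner Y r).rowLen i = if i = r then Y.rowLen r - 1 else Y.rowLen i := by
  by_cases hir : i = r
  · subst hir
    rw [if_pos rfl]
    apply rowLen_eq_of_iff
    intro j
    rw [← YoungDiagram.mem_cells, eraseCorner_mem h, YoungDiagram.mem_cells,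
      YoungDiagram.mem_iff_lt_rowLen]
    simp only [ne_eq, Prod.mk.injEq, true_and]
    omega
  · rw [if_neg hir]
    apply rowLen_eq_of_iff
    intro j
    rw [← YoungDiagram.mem_cells, eraseCorner_mem h, YoungDiagram.mem_cells,
      YoungDiagram.mem_iff_lt_rowLen]
    constructor
    · tauto
    · intro hj
      exact ⟨hj, fun hc => hir (congrArg Prod.fst hc)⟩

lemma eraseCorner_card {Y : YoungDiagram} {r : ℕ} (h : Y.rowLen (r+1) < Y.rowLen r) :
    (eraseCorner Y r).card + 1 = Y.card := by
  have hmem : (r, Y.rowLen r - 1) ∈ Y.cells := by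
    rw [YoungDiagram.mem_cells, YoungDiagram.mem_iff_lt_rowLen]
    omega
  show (eraseCorner Y r).cells.card + 1 = Y.cells.card
  rw [eraseCorner, dif_pos h]
  simp only [Finset.card_erase_of_mem hmem]
  have : 1 ≤ Y.cells.card := Finset.card_pos.mpr ⟨_, hmem⟩
  omega

lemma eraseCorner_subset {Y : YoungDiagram} {r : ℕ} (h : Y.rowLen (r+1) < Y.rowLen r) :
    (eraseCorner Y r).cells ⊆ Y.cells := by
  rw [eraseCorner, dif_pos h]
  exact Finset.erase_subset _ _

lemma colLen_le_of_subset {Z Y : YoungDiagram} (h : Z.cells ⊆ Y.cells) (j : ℕ) :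
    Z.colLen j ≤ Y.colLen j := by
  by_cases h0 : Z.colLen j = 0
  · omega
  · have : (Z.colLen j - 1, j) ∈ Z := YoungDiagram.mem_iff_lt_colLen.mpr (by omega)
    have : (Z.colLen j - 1, j) ∈ Y := by
      rw [← YoungDiagram.mem_cells] at this ⊢
      exact h this
    have := YoungDiagram.mem_iff_lt_colLen.mp this
    omega

lemma erase_range_split (K r : ℕ) (hr : r < K) :
    (Finset.range K).erase r = Finset.range r ∪ Finset.Ioo r K := by
  ext i
  simp only [Finset.mem_erase, Finset.mem_range, Finset.mem_union, Finset.mem_Ioo]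
  omega

lemma vand_decomp (K r : ℕ) (hr : r < K) (z : ℕ → ℚ) :
    ∏ i ∈ Finset.range K, ∏ j ∈ Finset.Ioo i K, (z i - z j)
    = ((∏ i ∈ (Finset.range K).erase r, ∏ j ∈ (Finset.Ioo i K).erase r, (z i - z j))
      * ∏ i ∈ Finset.range r, (z i - z r)) * ∏ j ∈ Finset.Ioo r K, (z r - z j) := by
  classical
  rw [← Finset.mul_prod_erase (Finset.range K) _ (Finset.mem_range.mpr hr)]
  rw [mul_comm]
  congr 1
  have hsplit : ∀ i ∈ (Finset.range K).erase r,
      ∏ j ∈ Finset.Ioo i K, (z i - z j)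
      = (∏ j ∈ (Finset.Ioo i K).erase r, (z i - z j)) * (if i < r then z i - z r else 1) := by
    intro i hi
    have hi' := Finset.mem_erase.mp hi
    by_cases hir : i < r
    · rw [if_pos hir, mul_comm]
      exact (Finset.mul_prod_erase _ _ (Finset.mem_Ioo.mpr ⟨hir, hr⟩)).symm
    · rw [if_neg hir, mul_one, Finset.erase_eq_of_notMem]
      simp only [Finset.mem_Ioo]
      omega
  rw [Finset.prod_congr rfl hsplit, Finset.prod_mul_distrib]
  congr 1
  rw [erase_range_split K r hr, Finset.prod_union (by
    simp only [Finset.disjoint_left, Finset.mem_range, Finset.mem_Ioo]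
    omega)]
  rw [Finset.prod_congr rfl (fun i hi => if_pos (Finset.mem_range.mp hi)),
    Finset.prod_congr rfl (fun i hi => if_neg (by simp only [Finset.mem_Ioo] at hi; omega)),
    Finset.prod_const_one, mul_one]

lemma vand_update (K r : ℕ) (hr : r < K) (y y' : ℕ → ℚ)
    (hy : ∀ j, j ≠ r → y' j = y j) (hyr : y' r = y r - 1) :
    (∏ i ∈ Finset.range K, ∏ j ∈ Finset.Ioo i K, (y' i - y' j))
      * (∏ j ∈ (Finset.range K).erase r, (y r - y j))
    = (∏ i ∈ Finset.range K, ∏ j ∈ Finset.Ioo i K, (y i - y j))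
      * (∏ j ∈ (Finset.range K).erase r, (y r - 1 - y j)) := by
  classical
  rw [vand_decomp K r hr y, vand_decomp K r hr y']
  have hA : (∏ i ∈ (Finset.range K).erase r, ∏ j ∈ (Finset.Ioo i K).erase r, (y' i - y' j))
      = ∏ i ∈ (Finset.range K).erase r, ∏ j ∈ (Finset.Ioo i K).erase r, (y i - y j) := by
    refine Finset.prod_congr rfl fun i hi => Finset.prod_congr rfl fun j hj => ?_
    rw [hy i (Finset.mem_erase.mp hi).1, hy j (Finset.mem_erase.mp hj).1]
  have hB : (∏ i ∈ Finset.range r, (y' i - y' r)) =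
      ∏ i ∈ Finset.range r, (y i - (y r - 1)) := by
    refine Finset.prod_congr rfl fun i hi => ?_
    rw [hy i (by simp only [Finset.mem_range] at hi; omega), hyr]
  have hC : (∏ j ∈ Finset.Ioo r K, (y' r - y' j)) =
      ∏ j ∈ Finset.Ioo r K, (y r - 1 - y j) := by
    refine Finset.prod_congr rfl fun j hj => ?_
    rw [hy j (by simp only [Finset.mem_Ioo] at hj; omega), hyr]
  have hD : (∏ j ∈ (Finset.range K).erase r, (y r - y j))
      = (∏ j ∈ Finset.range r, (y r - y j)) * ∏ j ∈ Finset.Ioo r K, (y r - y j) := by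
    rw [erase_range_split K r hr, Finset.prod_union (by
      simp only [Finset.disjoint_left, Finset.mem_range, Finset.mem_Ioo]
      omega)]
  have hN : (∏ j ∈ (Finset.range K).erase r, (y r - 1 - y j))
      = (∏ j ∈ Finset.range r, (y r - 1 - y j)) * ∏ j ∈ Finset.Ioo r K, (y r - 1 - y j) := by
    rw [erase_range_split K r hr, Finset.prod_union (by
      simp only [Finset.disjoint_left, Finset.mem_range, Finset.mem_Ioo]
      omega)]
  rw [hA, hB, hC, hD, hN]
  set A := ∏ i ∈ (Finset.range K).erase r, ∏ j ∈ (Finset.Ioo i K).erase r, (y i - y j)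
  set B := ∏ i ∈ Finset.range r, (y i - y r)
  set B' := ∏ i ∈ Finset.range r, (y i - (y r - 1))
  set C := ∏ j ∈ Finset.Ioo r K, (y r - y j)
  set C' := ∏ j ∈ Finset.Ioo r K, (y r - 1 - y j)
  set D1 := ∏ j ∈ Finset.range r, (y r - y j)
  set N1 := ∏ j ∈ Finset.range r, (y r - 1 - y j)
  have key : B' * D1 = B * N1 := by
    rw [← Finset.prod_mul_distrib, ← Finset.prod_mul_distrib]
    exact Finset.prod_congr rfl fun i _ => by ring
  linear_combination (A * C * C') * key

def cornerRows (Y : YoungDiagram) : Finset ℕ :=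
  (Finset.range (Y.colLen 0)).filter (fun r => Y.rowLen (r+1) < Y.rowLen r)

lemma hookProd_pos (Y : YoungDiagram) : 0 < ∏ c ∈ Y.cells, hookLength Y c.1 c.2 := by
  apply Finset.prod_pos
  intro c hc
  have hm : c ∈ Y := (Y.mem_cells c).mp hc
  obtain ⟨i, j⟩ := c
  have hj : j < Y.rowLen i := YoungDiagram.mem_iff_lt_rowLen.mp hm
  have hi : i < Y.colLen 0 := YoungDiagram.mem_iff_lt_colLen.mp
    (Y.up_left_mem (le_refl i) (Nat.zero_le j) hm)
  exact (hook_eq Y (Y.colLen 0) (le_refl _) hi hj).2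

theorem hook_branching : ∀ (n : ℕ) (Y : YoungDiagram), Y.card = n →
    ((∏ c ∈ Y.cells, hookLength Y c.1 c.2) ∣ n.factorial ∧
     (1 ≤ n → charDegree Y = ∑ r ∈ cornerRows Y, charDegree (eraseCorner Y r))) := by
  intro n
  induction n using Nat.strong_induction_on with
  | _ n IH =>
  intro Y hYn
  rcases Nat.eq_zero_or_pos n with hn0 | hn1
  · subst hn0
    have hcells : Y.cells = ∅ := Finset.card_eq_zero.mp hYn
    rw [hcells]
    simp
  set K := Y.colLen 0 with hKdef
  have hK : Y.colLen 0 ≤ K := le_refl _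
  have hK1 : 1 ≤ K := by
    have hposc : 0 < Y.cells.card := by
      show 0 < Y.card
      omega
    obtain ⟨c, hc⟩ := Finset.card_pos.mp hposc
    have h00 : (0,0) ∈ Y := Y.up_left_mem (Nat.zero_le _) (Nat.zero_le _) ((Y.mem_cells c).mp hc)
    have h0 := YoungDiagram.mem_iff_lt_colLen.mp h00
    rw [hKdef]
    omega
  have hrowpos : ∀ r, r < K → 1 ≤ Y.rowLen r := by
    intro r hr
    have hmem : (r, 0) ∈ Y := YoungDiagram.mem_iff_lt_colLen.mpr hr
    have := YoungDiagram.mem_iff_lt_rowLen.mp hmem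
    omega
  have hxpos : ∀ r, r < K → 1 ≤ beta Y K r := by
    intro r hr
    have := hrowpos r hr
    unfold beta
    omega
  have hxq_inj : Set.InjOn (fun i => (beta Y K i : ℚ)) (Finset.range K) := by
    intro a ha b hb h
    simp only [Finset.coe_range, Set.mem_Iio] at ha hb
    have hab : beta Y K a = beta Y K b := Nat.cast_injective h
    rcases lt_trichotomy a b with hh | hh | hh
    · have := beta_anti Y K hh hb; omega
    · exact hh
    · have := beta_anti Y K hh ha; omega
  set H : ℕ := ∏ c ∈ Y.cells, hookLength Y c.1 c.2 with hHdef
  have hHpos : 0 < H := hookProd_pos Y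
  have hglobal := global_fact Y K hK
  set Pq : ℚ := ∏ i ∈ Finset.range K, ((beta Y K i).factorial : ℚ) with hPqdef
  set Vq : ℚ := ∏ i ∈ Finset.range K, ∏ j ∈ Finset.Ioo i K,
    ((beta Y K i : ℚ) - (beta Y K j : ℚ)) with hVqdef
  have hVcast : ((∏ i ∈ Finset.range K, ∏ j ∈ Finset.Ioo i K,
      (beta Y K i - beta Y K j) : ℕ) : ℚ) = Vq := by
    rw [hVqdef, Nat.cast_prod]
    refine Finset.prod_congr rfl fun i hi => ?_
    rw [Nat.cast_prod]
    refine Finset.prod_congr rfl fun j hj => ?_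
    simp only [Finset.mem_Ioo] at hj
    exact Nat.cast_sub (le_of_lt (beta_anti Y K hj.1 hj.2))
  have hVnpos : 0 < ∏ i ∈ Finset.range K, ∏ j ∈ Finset.Ioo i K,
      (beta Y K i - beta Y K j) := by
    apply Finset.prod_pos
    intro i hi
    apply Finset.prod_pos
    intro j hj
    simp only [Finset.mem_Ioo] at hj
    have := beta_anti Y K hj.1 hj.2
    omega
  have hVq_ne : Vq ≠ 0 := by
    rw [← hVcast]
    exact_mod_cast hVnpos.ne'
  have hPq_pos : 0 < Pq := by
    rw [hPqdef]
    apply Finset.prod_pos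
    intro i _
    exact_mod_cast (beta Y K i).factorial_pos
  have hPHV : Pq = (H:ℚ) * Vq := by
    have hcast : ((∏ i ∈ Finset.range K, (beta Y K i).factorial : ℕ) : ℚ)
        = ((H * ∏ i ∈ Finset.range K, ∏ j ∈ Finset.Ioo i K,
            (beta Y K i - beta Y K j) : ℕ) : ℚ) := by
      exact_mod_cast congrArg (fun t : ℕ => (t:ℚ)) hglobal
    rw [Nat.cast_mul, Nat.cast_prod, hVcast] at hcast
    exact hcast
  have key : ∀ r ∈ cornerRows Y, (charDegree (eraseCorner Y r) : ℚ) =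
      ((n-1).factorial : ℚ) * Vq / Pq *
        ((beta Y K r : ℚ) *
          (∏ j ∈ (Finset.range K).erase r, ((beta Y K r : ℚ) - 1 - (beta Y K j : ℚ))) /
          (∏ j ∈ (Finset.range K).erase r, ((beta Y K r : ℚ) - (beta Y K j : ℚ)))) := by
    intro r hr
    rw [cornerRows, Finset.mem_filter, Finset.mem_range, ← hKdef] at hr
    obtain ⟨hrK, hcr⟩ := hr
    set Z := eraseCorner Y r with hZdef
    have hZsub : Z.cells ⊆ Y.cells := eraseCorner_subset hcr
    have hZcol : Z.colLen 0 ≤ K := colLen_le_of_subset hZsub 0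
    have hZcard : Z.card = n - 1 := by
      have h := eraseCorner_card hcr
      rw [hZdef]
      omega
    have hxr1 : 1 ≤ beta Y K r := hxpos r hrK
    have hx' : ∀ i, beta Z K i = if i = r then beta Y K r - 1 else beta Y K i := by
      intro i
      unfold beta
      rw [hZdef, eraseCorner_rowLen hcr i]
      by_cases hir : i = r
      · subst hir
        rw [if_pos rfl, if_pos rfl]
        have := hrowpos i hrK
        omega
      · rw [if_neg hir, if_neg hir]
    set HZ : ℕ := ∏ c ∈ Z.cells, hookLength Z c.1 c.2 with hHZdef
    have hHZpos : 0 < HZ := hookProd_pos Z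
    have hIH := IH (n-1) (by omega) Z hZcard
    have hdvd : HZ ∣ (n-1).factorial := hIH.1
    have hcdeg : (charDegree Z : ℚ) = ((n-1).factorial : ℚ) / (HZ : ℚ) := by
      rw [charDegree, hZcard, ← hHZdef]
      rw [Nat.cast_div hdvd (by exact_mod_cast hHZpos.ne')]
    have hglobZ := global_fact Z K hZcol
    set PqZ : ℚ := ∏ i ∈ Finset.range K, ((beta Z K i).factorial : ℚ) with hPqZdef
    set VqZ : ℚ := ∏ i ∈ Finset.range K, ∏ j ∈ Finset.Ioo i K,
      ((beta Z K i : ℚ) - (beta Z K j : ℚ)) with hVqZdef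
    have hVcastZ : ((∏ i ∈ Finset.range K, ∏ j ∈ Finset.Ioo i K,
        (beta Z K i - beta Z K j) : ℕ) : ℚ) = VqZ := by
      rw [hVqZdef, Nat.cast_prod]
      refine Finset.prod_congr rfl fun i hi => ?_
      rw [Nat.cast_prod]
      refine Finset.prod_congr rfl fun j hj => ?_
      simp only [Finset.mem_Ioo] at hj
      exact Nat.cast_sub (le_of_lt (beta_anti Z K hj.1 hj.2))
    have hVnZpos : 0 < ∏ i ∈ Finset.range K, ∏ j ∈ Finset.Ioo i K,
        (beta Z K i - beta Z K j) := by
      apply Finset.prod_pos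
      intro i hi
      apply Finset.prod_pos
      intro j hj
      simp only [Finset.mem_Ioo] at hj
      have := beta_anti Z K hj.1 hj.2
      omega
    have hVqZ_ne : VqZ ≠ 0 := by
      rw [← hVcastZ]
      exact_mod_cast hVnZpos.ne'
    have hPqZ_pos : 0 < PqZ := by
      rw [hPqZdef]
      apply Finset.prod_pos
      intro i _
      exact_mod_cast (beta Z K i).factorial_pos
    have hPHVZ : PqZ = (HZ:ℚ) * VqZ := by
      have hcast : ((∏ i ∈ Finset.range K, (beta Z K i).factorial : ℕ) : ℚ)
          = ((HZ * ∏ i ∈ Finset.range K, ∏ j ∈ Finset.Ioo i K,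
              (beta Z K i - beta Z K j) : ℕ) : ℚ) := by
        exact_mod_cast congrArg (fun t : ℕ => (t:ℚ)) hglobZ
      rw [Nat.cast_mul, Nat.cast_prod, hVcastZ] at hcast
      exact hcast
    have hPP : Pq = PqZ * (beta Y K r : ℚ) := by
      rw [hPqdef, hPqZdef]
      rw [← Finset.mul_prod_erase _ (fun i => ((beta Y K i).factorial : ℚ))
            (Finset.mem_range.mpr hrK),
          ← Finset.mul_prod_erase _ (fun i => ((beta Z K i).factorial : ℚ))
            (Finset.mem_range.mpr hrK)]
      have herase : ∏ i ∈ (Finset.range K).erase r, ((beta Z K i).factorial : ℚ)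
          = ∏ i ∈ (Finset.range K).erase r, ((beta Y K i).factorial : ℚ) := by
        refine Finset.prod_congr rfl fun i hi => ?_
        rw [hx' i, if_neg (Finset.mem_erase.mp hi).1]
      rw [herase, hx' r, if_pos rfl]
      have hfact : beta Y K r * (beta Y K r - 1).factorial
          = (beta Y K r).factorial := Nat.mul_factorial_pred (by omega)
      rw [← hfact]
      push_cast
      ring
    have hVV : VqZ * (∏ j ∈ (Finset.range K).erase r, ((beta Y K r : ℚ) - (beta Y K j : ℚ)))
        = Vq * (∏ j ∈ (Finset.range K).erase r,
            ((beta Y K r : ℚ) - 1 - (beta Y K j : ℚ))) := by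
      rw [hVqZdef, hVqdef]
      apply vand_update K r hrK (fun i => (beta Y K i : ℚ)) (fun i => (beta Z K i : ℚ))
      · intro j hj
        rw [hx' j, if_neg hj]
      · rw [hx' r, if_pos rfl, Nat.cast_sub hxr1]
        norm_num
    have hD_ne : (∏ j ∈ (Finset.range K).erase r,
        ((beta Y K r : ℚ) - (beta Y K j : ℚ))) ≠ 0 := by
      rw [Finset.prod_ne_zero_iff]
      intro j hj
      have hj' := Finset.mem_erase.mp hj
      refine sub_ne_zero.mpr fun h => hj'.1 ?_
      exact (hxq_inj (by simpa using hrK) (by simpa using hj'.2) h).symm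
    have hHZq_ne : (HZ:ℚ) ≠ 0 := by exact_mod_cast hHZpos.ne'
    rw [hcdeg, div_mul_div_comm,
      div_eq_div_iff hHZq_ne (mul_ne_zero hPq_pos.ne' hD_ne), hPP, hPHVZ]
    linear_combination (((n-1).factorial : ℚ) * (beta Y K r : ℚ) * (HZ:ℚ)) * hVV
  -- assemble the sum
  have hNq : ((∑ r ∈ cornerRows Y, charDegree (eraseCorner Y r) : ℕ) : ℚ)
      = ((n-1).factorial : ℚ) * Vq / Pq *
        ∑ r ∈ cornerRows Y, ((beta Y K r : ℚ) *
          (∏ j ∈ (Finset.range K).erase r, ((beta Y K r : ℚ) - 1 - (beta Y K j : ℚ))) /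
          (∏ j ∈ (Finset.range K).erase r, ((beta Y K r : ℚ) - (beta Y K j : ℚ)))) := by
    rw [Nat.cast_sum, Finset.mul_sum]
    exact Finset.sum_congr rfl key
  have hext : ∑ r ∈ cornerRows Y, ((beta Y K r : ℚ) *
          (∏ j ∈ (Finset.range K).erase r, ((beta Y K r : ℚ) - 1 - (beta Y K j : ℚ))) /
          (∏ j ∈ (Finset.range K).erase r, ((beta Y K r : ℚ) - (beta Y K j : ℚ))))
      = ∑ r ∈ Finset.range K, ((beta Y K r : ℚ) *
          (∏ j ∈ (Finset.range K).erase r, ((beta Y K r : ℚ) - 1 - (beta Y K j : ℚ))) /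
          (∏ j ∈ (Finset.range K).erase r, ((beta Y K r : ℚ) - (beta Y K j : ℚ)))) := by
    rw [cornerRows, ← hKdef]
    apply Finset.sum_filter_of_ne
    intro r hr hne
    rw [Finset.mem_range] at hr
    by_contra hcond
    apply hne
    have heq : Y.rowLen (r+1) = Y.rowLen r := by
      have := Y.rowLen_anti r (r+1) (by omega)
      omega
    have hr1K : r + 1 < K := by
      have h1 : 1 ≤ Y.rowLen (r+1) := by
        have := hrowpos r hr
        omega
      have hmem : (r+1, 0) ∈ Y := YoungDiagram.mem_iff_lt_rowLen.mpr (by omega)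
      have := YoungDiagram.mem_iff_lt_colLen.mp hmem
      rw [hKdef]
      omega
    have hbsucc : beta Y K (r+1) + 1 = beta Y K r := by
      unfold beta
      omega
    have hmem : r + 1 ∈ (Finset.range K).erase r :=
      Finset.mem_erase.mpr ⟨by omega, Finset.mem_range.mpr hr1K⟩
    rw [Finset.prod_eq_zero hmem (by
      rw [show ((beta Y K (r+1) : ℕ) : ℚ) = (beta Y K r : ℚ) - 1 by
        rw [← hbsucc]; push_cast; ring]
      ring)]
    simp
  have hres := residue_identity K hK1 (fun i => (beta Y K i : ℚ)) hxq_inj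
  have hsb : (2:ℚ) * (∑ i ∈ Finset.range K, (beta Y K i : ℚ)) + K = 2 * n + K * K := by
    have h3 := sum_beta Y K hK
    rw [hYn] at h3
    exact_mod_cast congrArg (fun t : ℕ => (t:ℚ)) h3
  have hnval : ∑ r ∈ Finset.range K, ((beta Y K r : ℚ) *
          (∏ j ∈ (Finset.range K).erase r, ((beta Y K r : ℚ) - 1 - (beta Y K j : ℚ))) /
          (∏ j ∈ (Finset.range K).erase r, ((beta Y K r : ℚ) - (beta Y K j : ℚ))))
      = (n : ℚ) := by
    rw [hres]
    push_cast at hsb ⊢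
    linear_combination hsb / 2
  have htot : ((∑ r ∈ cornerRows Y, charDegree (eraseCorner Y r) : ℕ) : ℚ) * H
      = (n.factorial : ℚ) := by
    rw [hNq, hext, hnval, hPHV]
    have hHq_ne : (H:ℚ) ≠ 0 := by exact_mod_cast hHpos.ne'
    field_simp
    rw [show n.factorial = n * (n-1).factorial from (Nat.mul_factorial_pred hn1.ne').symm]
    push_cast
    ring
  have htot' : (∑ r ∈ cornerRows Y, charDegree (eraseCorner Y r)) * H = n.factorial := by
    exact_mod_cast htot
  constructor
  · exact ⟨∑ r ∈ cornerRows Y, charDegree (eraseCorner Y r), by rw [← htot', mul_comm]⟩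
  · intro _
    rw [charDegree, hYn, ← hHdef, ← htot', Nat.mul_div_cancel _ hHpos]

def singleRow (n : ℕ) : YoungDiagram where
  cells := {0} ×ˢ Finset.range n
  isLowerSet := by
    intro a b hba ha
    simp only [Finset.coe_product, Finset.coe_singleton, Finset.coe_range,
      Set.mem_prod, Set.mem_singleton_iff, Set.mem_Iio] at ha ⊢
    obtain ⟨h1, h2⟩ := Prod.le_def.mp hba
    constructor
    · omega
    · omega

lemma singleRow_mem {n : ℕ} {c : ℕ × ℕ} : c ∈ singleRow n ↔ c.1 = 0 ∧ c.2 < n := by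
  rw [← YoungDiagram.mem_cells]
  show c ∈ {0} ×ˢ Finset.range n ↔ _
  rw [Finset.mem_product, Finset.mem_singleton, Finset.mem_range]

lemma singleRow_card (n : ℕ) : (singleRow n).card = n := by
  show ({0} ×ˢ Finset.range n).card = n
  simp

lemma singleRow_charDegree (n : ℕ) : charDegree (singleRow n) = 1 := by
  have hrow : (singleRow n).rowLen 0 = n :=
    rowLen_eq_of_iff (fun j => by simp [singleRow_mem])
  have hcol : ∀ j, j < n → (singleRow n).colLen j = 1 := by
    intro j hj
    have h0 : (0, j) ∈ singleRow n := by simp [singleRow_mem, hj]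
    have h1 : (1, j) ∉ singleRow n := by simp [singleRow_mem]
    have c0 := YoungDiagram.mem_iff_lt_colLen.mp h0
    have c1 : ¬ 1 < (singleRow n).colLen j := fun hcc =>
      h1 (YoungDiagram.mem_iff_lt_colLen.mpr hcc)
    omega
  have hprod : (∏ c ∈ (singleRow n).cells, hookLength (singleRow n) c.1 c.2)
      = ∏ j ∈ Finset.range n, hookLength (singleRow n) 0 j := by
    show (∏ c ∈ {0} ×ˢ Finset.range n, hookLength (singleRow n) c.1 c.2) = _
    rw [Finset.singleton_product, Finset.prod_map]
    rfl
  have heach : ∀ j ∈ Finset.range n, hookLength (singleRow n) 0 j = n - j := by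
    intro j hj
    rw [Finset.mem_range] at hj
    rw [hookLength, hrow, hcol j hj]
    omega
  rw [charDegree, singleRow_card, hprod, Finset.prod_congr rfl heach,
    prod_range_sub_eq_factorial, Nat.div_self n.factorial_pos]

lemma yminus_finite (Y : YoungDiagram) : (Yminus Y).Finite := by
  apply Set.Finite.of_finite_image (f := fun Z : YoungDiagram => Z.cells)
  · apply Set.Finite.subset (Y.cells.powerset : Finset _).finite_toSet
    rintro s ⟨Z, hZ, rfl⟩
    simp only [Finset.coe_powerset, Set.mem_preimage, Set.mem_powerset_iff,
      Finset.coe_subset, Finset.mem_coe]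
    exact_mod_cast hZ.1
  · intro Z1 _ Z2 _ h
    cases Z1
    cases Z2
    simpa using h

lemma yminus_ncard_le (Y : YoungDiagram) : (Yminus Y).ncard ≤ 2 ^ Y.card := by
  have h1 : (Yminus Y).ncard ≤ (↑(Y.cells.powerset) : Set (Finset (ℕ × ℕ))).ncard := by
    apply Set.ncard_le_ncard_of_injOn (fun Z : YoungDiagram => Z.cells)
    · intro Z hZ
      simp only [Finset.coe_powerset, Set.mem_preimage, Set.mem_powerset_iff,
        Finset.coe_subset]
      exact hZ.1
    · intro Z1 _ Z2 _ h
      cases Z1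
      cases Z2
      simpa using h
  rw [Set.ncard_coe_finset, Finset.card_powerset] at h1
  exact h1

end Aux

/-- For every `n ≥ 1` and prime `p`, there is a `p'`-partition of `n`, and every
`p'`-partition `λ` of `n` has at least one `p'`-partition in `λ⁻`;
i.e. `br n ≥ 1`. -/
theorem exists_pprime_constituent (n p : ℕ) (hn : 1 ≤ n) (hp : p.Prime) :
    (∃ Y : YoungDiagram, Y.card = n ∧ CoprimeDeg p Y ∧ (YminusP p Y).Nonempty) ∧
      (∀ Y : YoungDiagram, Y.card = n → CoprimeDeg p Y → (YminusP p Y).Nonempty) ∧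
      1 ≤ br p n := by
  classical
  have part2 : ∀ Y : YoungDiagram, Y.card = n → CoprimeDeg p Y → (YminusP p Y).Nonempty := by
    intro Y hcard hcop
    have hb := (hook_branching n Y hcard).2 hn
    by_contra hne
    rw [Set.not_nonempty_iff_eq_empty] at hne
    apply hcop
    rw [CoprimeDeg] at *
    rw [hb]
    apply Finset.dvd_sum
    intro r hr
    by_contra hpr
    have hcr : Y.rowLen (r+1) < Y.rowLen r := (Finset.mem_filter.mp hr).2
    have hmem : eraseCorner Y r ∈ YminusP p Y :=
      ⟨⟨eraseCorner_subset hcr, eraseCorner_card hcr⟩, hpr⟩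
    rw [hne] at hmem
    exact hmem
  have hrowcard : (singleRow n).card = n := singleRow_card n
  have hcop_row : CoprimeDeg p (singleRow n) := by
    rw [CoprimeDeg, singleRow_charDegree]
    intro h
    have := Nat.le_of_dvd one_pos h
    have := hp.two_le
    omega
  have part1 : ∃ Y : YoungDiagram, Y.card = n ∧ CoprimeDeg p Y ∧ (YminusP p Y).Nonempty :=
    ⟨singleRow n, hrowcard, hcop_row, part2 _ hrowcard hcop_row⟩
  refine ⟨part1, part2, ?_⟩
  have hfinP : (YminusP p (singleRow n)).Finite :=
    (yminus_finite (singleRow n)).subset (fun Z hZ => hZ.1)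
  have hpos : 0 < (YminusP p (singleRow n)).ncard := by
    rw [Set.ncard_pos hfinP]
    exact part2 _ hrowcard hcop_row
  have hmemS : (YminusP p (singleRow n)).ncard ∈
      {m | ∃ Y : YoungDiagram, Y.card = n ∧ CoprimeDeg p Y ∧ m = (YminusP p Y).ncard} :=
    ⟨singleRow n, hrowcard, hcop_row, rfl⟩
  have hbdd : BddAbove {m | ∃ Y : YoungDiagram, Y.card = n ∧ CoprimeDeg p Y ∧
      m = (YminusP p Y).ncard} := by
    refine ⟨2 ^ n, ?_⟩
    rintro m ⟨Y, hY, _, rfl⟩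
    calc (YminusP p Y).ncard ≤ (Yminus Y).ncard :=
          Set.ncard_le_ncard (fun Z hZ => hZ.1) (yminus_finite Y)
      _ ≤ 2 ^ Y.card := yminus_ncard_le Y
      _ = 2 ^ n := by rw [hY]
  calc 1 ≤ (YminusP p (singleRow n)).ncard := hpos
    _ ≤ br p n := le_csSup hbdd hmemS
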